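/- Let X be a Banach space, φ ∈ C¹(X,ℝ), S ⊆ X, c ∈ ℝ, ε > 0 and δ > 0. Assume that for every u ∈ φ⁻¹([c−2ε, c+2ε]) with B_{2δ}(u) ∩ S ≠ ∅ one has ‖φ'(u)‖ ≥ 8ε/δ. Then there exists a homeomorphism η : X → X such that φ∘η ≤ φ, η(u) = u whenever φ(u) ∉ [c−2ε, c+2ε] or B_{2δ}(u) ∩ S = ∅, φ(η(u)) ≤ c−ε whenever u ∈ S and φ(u) ≤ c+ε, and ‖η(u)−u‖ ≤ δ for every u ∈ X. -/

import Mathlib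

open Set Metric Real Filter Topology

namespace WQD

variable {X : Type*} [NormedAddCommGroup X] [NormedSpace ℝ X]

theorem hasDerivWithinAt_of_nmem_closure {f : ℝ → X} {v : X} {s : Set ℝ} {x : ℝ}
    (h : x ∉ closure s) : HasDerivWithinAt f v s x := by
  rw [hasDerivWithinAt_iff_tendsto_slope]
  have h1 : 𝓝[s] x = ⊥ := by
    by_contra hne
    exact h (mem_closure_iff_nhdsWithin_neBot.mpr ⟨hne⟩)
  have h2 : 𝓝[s \ {x}] x = ⊥ :=
    le_bot_iff.mp (h1 ▸ nhdsWithin_mono x diff_subset)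
  rw [h2]
  exact tendsto_bot

/-- A solution of `σ' = f ∘ σ` on `[0, T]` with initial value `u`. -/
def Sol (f : X → X) (T : ℝ) (u : X) (σ : ℝ → X) : Prop :=
  σ 0 = u ∧ ∀ t ∈ Icc (0:ℝ) T, HasDerivWithinAt σ (f (σ t)) (Icc (0:ℝ) T) t

theorem Sol.mono {f : X → X} {T T' : ℝ} {u : X} {σ : ℝ → X} (h : Sol f T u σ)
    (hT : T' ≤ T) : Sol f T' u σ :=
  ⟨h.1, fun t ht => (h.2 t ⟨ht.1, ht.2.trans hT⟩).mono (Icc_subset_Icc le_rfl hT)⟩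

theorem Sol.continuousOn {f : X → X} {T : ℝ} {u : X} {σ : ℝ → X} (h : Sol f T u σ) :
    ContinuousOn σ (Icc 0 T) :=
  fun t ht => (h.2 t ht).continuousWithinAt

theorem Sol.norm_sub_le {f : X → X} (hb : ∀ x, ‖f x‖ ≤ 1) {T : ℝ} {u : X} {σ : ℝ → X}
    (h : Sol f T u σ) {s t : ℝ} (hs : s ∈ Icc (0:ℝ) T) (ht : t ∈ Icc (0:ℝ) T) :
    ‖σ s - σ t‖ ≤ |s - t| := by
  have := Convex.norm_image_sub_le_of_norm_hasDerivWithin_le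
    (f' := fun t => f (σ t)) (fun x hx => h.2 x hx) (fun x _ => hb _) (convex_Icc _ _) ht hs
  simpa [Real.norm_eq_abs] using this

theorem Sol.hasDerivWithinAt_Ici {f : X → X} {T : ℝ} {u : X} {σ : ℝ → X} (h : Sol f T u σ)
    {t : ℝ} (ht : t ∈ Ico (0:ℝ) T) : HasDerivWithinAt σ (f (σ t)) (Ici t) t :=
  ((h.2 t ⟨ht.1, ht.2.le⟩).mono (Icc_subset_Icc ht.1 le_rfl)).mono_of_mem_nhdsWithin
    (Icc_mem_nhdsGE ht.2)

theorem sol_const {f : X → X} {u : X} (hu : f u = 0) (T : ℝ) : Sol f T u (fun _ => u) := by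
  refine ⟨rfl, fun t ht => ?_⟩
  simpa [hu] using hasDerivWithinAt_const t (Icc (0:ℝ) T) u

theorem Sol.glue {f : X → X} {a c : ℝ} {u : X} {σ γ : ℝ → X} (ha : 0 ≤ a)
    (hσ : Sol f a u σ) (hγa : γ a = σ a)
    (hγ : ∀ t ∈ Icc a c, HasDerivWithinAt γ (f (γ t)) (Icc a c) t) :
    Sol f c u (fun t => if t ≤ a then σ t else γ t) := by
  set g : ℝ → X := fun s => if s ≤ a then σ s else γ s with hgdef
  have hEqσ : EqOn g σ (Icc 0 a) := fun s hs => by simp [hgdef, hs.2]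
  rcases le_or_gt c a with hca | hac
  · refine ⟨?_, fun t ht => ?_⟩
    · show g 0 = u
      rw [hEqσ ⟨le_rfl, ha⟩, hσ.1]
    · have ht' : t ∈ Icc (0:ℝ) a := ⟨ht.1, ht.2.trans hca⟩
      have hgt : g t = σ t := hEqσ ht'
      show HasDerivWithinAt g (f (g t)) (Icc 0 c) t
      rw [hgt]
      exact ((hσ.2 t ht').mono (Icc_subset_Icc le_rfl hca)).congr
        (fun s hs => hEqσ ⟨hs.1, hs.2.trans hca⟩) hgt
  · have hEqγ : EqOn g γ (Icc a c) := by
      intro s hs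
      by_cases hsa : s ≤ a
      · have hsea : s = a := le_antisymm hsa hs.1
        simp [hgdef, hsa, hsea, hγa]
      · simp [hgdef, hsa]
    refine ⟨?_, fun t ht => ?_⟩
    · show g 0 = u
      rw [hEqσ ⟨le_rfl, ha⟩, hσ.1]
    · show HasDerivWithinAt g (f (g t)) (Icc 0 c) t
      have hsplit : Icc (0:ℝ) c = Icc 0 a ∪ Icc a c := (Icc_union_Icc_eq_Icc ha hac.le).symm
      have h1 : HasDerivWithinAt g (f (g t)) (Icc 0 a) t := by
        by_cases hta : t ≤ a
        · have ht' : t ∈ Icc (0:ℝ) a := ⟨ht.1, hta⟩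
          have hgt : g t = σ t := hEqσ ht'
          rw [hgt]
          exact (hσ.2 t ht').congr hEqσ hgt
        · apply hasDerivWithinAt_of_nmem_closure
          rw [isClosed_Icc.closure_eq]
          exact fun hmem => hta hmem.2
      have h2 : HasDerivWithinAt g (f (g t)) (Icc a c) t := by
        by_cases hta : a ≤ t
        · have ht' : t ∈ Icc a c := ⟨hta, ht.2⟩
          have hgt : g t = γ t := hEqγ ht'
          rw [hgt]
          exact (hγ t ht').congr hEqγ hgt
        · apply hasDerivWithinAt_of_nmem_closure
          rw [isClosed_Icc.closure_eq]
          exact fun hmem => hta hmem.1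
      rw [hsplit]
      exact h1.union h2

theorem exists_local_sol {f : X → X} [CompleteSpace X] (hb : ∀ x, ‖f x‖ ≤ 1)
    (hl : LocallyLipschitz f) (x₀ : X) :
    ∃ R > 0, ∀ y ∈ closedBall x₀ R, ∀ t₀ : ℝ, ∃ σ : ℝ → X, σ t₀ = y ∧
      ∀ t ∈ Icc (t₀ - R) (t₀ + R), HasDerivWithinAt σ (f (σ t)) (Icc (t₀ - R) (t₀ + R)) t := by
  obtain ⟨K, s, hs, hK⟩ := hl x₀
  obtain ⟨r, hr, hball⟩ := Metric.mem_nhds_iff.mp hs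
  refine ⟨r/4, by positivity, fun y hy t₀ => ?_⟩
  have hsub : closedBall y (r/4) ⊆ s := by
    intro z hz
    apply hball
    have h1 : dist z y ≤ r/4 := mem_closedBall.mp hz
    have h2 : dist y x₀ ≤ r/4 := mem_closedBall.mp hy
    have := dist_triangle z y x₀
    exact mem_ball.mpr (by linarith)
  have hpl : IsPicardLindelof (fun _ x => f x) (tmin := t₀ - r/4) (tmax := t₀ + r/4)
      ⟨t₀, by constructor <;> linarith⟩ y ⟨r/4, by positivity⟩ 0 1 K :=
    { lipschitzOnWith := fun t _ => hK.mono hsub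
      continuousOn := fun x _ => continuousOn_const
      norm_le := fun t _ x _ => hb x
      mul_max_le := by
        simp only [NNReal.coe_one, NNReal.coe_zero, one_mul, sub_zero]
        rw [add_sub_cancel_left, sub_sub_cancel, max_self]
        exact le_rfl }
  obtain ⟨σ, h1, h2⟩ := hpl.exists_eq_forall_mem_Icc_hasDerivWithinAt₀
  exact ⟨σ, h1, h2⟩

theorem sol_zero {f : X → X} (u : X) : Sol f 0 u (fun _ => u) := by
  refine ⟨rfl, fun t ht => ?_⟩
  have ht0 : t = 0 := le_antisymm ht.2 ht.1
  subst ht0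
  rw [hasDerivWithinAt_iff_tendsto_slope]
  have he : Icc (0:ℝ) 0 \ {0} = ∅ := by simp
  rw [he, nhdsWithin_empty]
  exact tendsto_bot

theorem exists_lipschitzOnWith_tube {f : X → X} (hb : ∀ x, ‖f x‖ ≤ 1) (hl : LocallyLipschitz f)
    {K : Set X} (hK : IsCompact K) (hne : K.Nonempty) :
    ∃ r > 0, ∃ L : NNReal, LipschitzOnWith L f {y | infDist y K ≤ r} := by
  choose Kz sz hsz hlip using hl
  choose rz hrz hball using fun z => Metric.mem_nhds_iff.mp (hsz z)
  obtain ⟨t, htK, hcov⟩ := hK.elim_nhds_subcover (fun z => ball z (rz z / 4))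
    (fun z _ => ball_mem_nhds z (by have := hrz z; positivity))
  have htne : t.Nonempty := by
    rcases hne with ⟨p, hp⟩
    rcases mem_iUnion₂.mp (hcov hp) with ⟨z, hz, _⟩
    exact ⟨z, hz⟩
  set r : ℝ := t.inf' htne (fun z => rz z) / 4 with hrdef
  have hrpos : 0 < r := by
    apply div_pos _ (by norm_num)
    rw [Finset.lt_inf'_iff]
    exact fun z _ => hrz z
  have hrle : ∀ z ∈ t, r ≤ rz z / 4 := fun z hz => by
    have := Finset.inf'_le (fun z => rz z) hz
    rw [hrdef]; linarith
  set L0 : ℝ := ((t.sup' htne fun z => (Kz z : ℝ)) ⊔ (2 / r)) with hL0def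
  have hL0nn : 0 ≤ L0 := le_trans (by positivity) (le_max_right _ _)
  have hcoe : (L0.toNNReal : ℝ) = L0 := Real.coe_toNNReal _ hL0nn
  refine ⟨r, hrpos, L0.toNNReal, LipschitzOnWith.of_dist_le_mul fun x hx y hy => ?_⟩
  rw [hcoe]
  rcases le_or_gt (dist x y) r with hd | hd
  · have hx' : infDist x K < 2 * r := lt_of_le_of_lt hx (by linarith)
    obtain ⟨p, hpK, hxp⟩ := (infDist_lt_iff hne).mp hx'
    obtain ⟨z, hzt, hpz⟩ := mem_iUnion₂.mp (hcov hpK)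
    rw [mem_ball] at hpz
    have h2r : 2 * r ≤ rz z / 2 := by have := hrle z hzt; linarith
    have hxz : dist x z < 3 * rz z / 4 := by
      have h3 : dist x z ≤ dist x p + dist p z := dist_triangle x p z
      linarith [hrle z hzt]
    have hyz : dist y z < rz z := by
      have h1 := dist_triangle y x z
      have h2 : dist y x ≤ r := by rwa [dist_comm]
      linarith [hrle z hzt]
    have hmem : ∀ w, dist w z < rz z → w ∈ sz z := fun w hw => hball z (mem_ball.mpr hw)
    have hlz := lipschitzOnWith_iff_dist_le_mul.mp (hlip z)
    have h4 := hlz x (hmem x (by linarith)) y (hmem y hyz)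
    refine h4.trans (mul_le_mul_of_nonneg_right ?_ dist_nonneg)
    exact le_trans (Finset.le_sup' (fun z => (Kz z : ℝ)) hzt) (le_max_left _ _)
  · have h2 : dist (f x) (f y) ≤ 2 := by
      rw [dist_eq_norm]
      calc ‖f x - f y‖ ≤ ‖f x‖ + ‖f y‖ := norm_sub_le _ _
      _ ≤ 2 := by linarith [hb x, hb y]
    calc dist (f x) (f y) ≤ 2 := h2
    _ = (2 / r) * r := by field_simp
    _ ≤ (2 / r) * dist x y := by
        apply mul_le_mul_of_nonneg_left hd.le (by positivity)
    _ ≤ L0 * dist x y := by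
        apply mul_le_mul_of_nonneg_right (le_max_right _ _) dist_nonneg

theorem dist_le_of_sol {f : X → X} (hb : ∀ x, ‖f x‖ ≤ 1) {T : ℝ} (hT : 0 ≤ T)
    {u₁ u₂ : X} {σ₁ σ₂ : ℝ → X} (h₁ : Sol f T u₁ σ₁) (h₂ : Sol f T u₂ σ₂)
    {r : ℝ} (hr : 0 < r) {L : NNReal}
    (hL : LipschitzOnWith L f {y | infDist y (σ₁ '' Icc 0 T) ≤ r})
    (hd : dist u₂ u₁ ≤ r/2 * exp (-(L * T))) :
    ∀ t ∈ Icc (0:ℝ) T, dist (σ₂ t) (σ₁ t) ≤ dist u₂ u₁ * exp (L * t) := by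
  set Kimg := σ₁ '' Icc 0 T with hKimg
  set tube := {y | infDist y Kimg ≤ r} with htube
  have hσ₁tube : ∀ s' ∈ Icc (0:ℝ) T, σ₁ s' ∈ tube := fun s' hs' => by
    have hm : σ₁ s' ∈ Kimg := mem_image_of_mem σ₁ hs'
    simp only [htube, mem_setOf_eq, infDist_zero_of_mem hm]
    exact hr.le
  have hexp1 : exp (-(L * T)) ≤ 1 := exp_le_one_iff.mpr (neg_nonpos.mpr (by positivity))
  set W := {t | t ∈ Icc (0:ℝ) T ∧ ∀ s' ∈ Icc (0:ℝ) t, σ₂ s' ∈ tube} with hW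
  have h0W : (0:ℝ) ∈ W := by
    refine ⟨⟨le_rfl, hT⟩, fun s' hs' => ?_⟩
    have hs0 : s' = 0 := le_antisymm hs'.2 hs'.1
    subst hs0
    rw [h₂.1]
    show infDist u₂ Kimg ≤ r
    have h1 : infDist u₂ Kimg ≤ dist u₂ (σ₁ 0) :=
      infDist_le_dist_of_mem (mem_image_of_mem σ₁ ⟨le_rfl, hT⟩)
    rw [h₁.1] at h1
    nlinarith [dist_nonneg (x := u₂) (y := u₁)]
  have hWne : W.Nonempty := ⟨0, h0W⟩
  have hWbdd : BddAbove W := ⟨T, fun t ht => ht.1.2⟩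
  set τ := sSup W with hτ
  have hτ0 : 0 ≤ τ := le_csSup hWbdd h0W
  have hτT : τ ≤ T := csSup_le hWne fun t ht => ht.1.2
  have hτW : ∀ s' ∈ Icc (0:ℝ) τ, σ₂ s' ∈ tube := by
    intro s' hs'
    show infDist (σ₂ s') Kimg ≤ r
    refine le_of_forall_pos_le_add fun ε' hε' => ?_
    rcases eq_or_lt_of_le hs'.1 with h0s | h0s
    · have hh := h0W.2 0 ⟨le_rfl, le_rfl⟩
      rw [← h0s]
      exact le_trans hh (by linarith)
    · have hbs : max 0 (s' - ε') < τ := by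
        rw [max_lt_iff]
        constructor
        · exact lt_of_lt_of_le h0s hs'.2
        · have := hs'.2; linarith
      obtain ⟨t', ht'W, hbt'⟩ := exists_lt_of_lt_csSup hWne hbs
      have ht'0 : 0 ≤ t' := le_trans (le_max_left _ _) hbt'.le
      have ht'T : t' ≤ T := ht'W.1.2
      rcases le_or_gt s' t' with hst | hts
      · exact le_trans (ht'W.2 s' ⟨hs'.1, hst⟩) (by linarith)
      · have hd2 : dist (σ₂ s') (σ₂ t') ≤ ε' := by
          rw [dist_eq_norm]
          have h5 := h₂.norm_sub_le hb ⟨hs'.1, hs'.2.trans hτT⟩ ⟨ht'0, ht'T⟩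
          have h6 : |s' - t'| = s' - t' := abs_of_nonneg (by linarith)
          have h7 : s' - t' ≤ ε' := by
            have := le_max_right 0 (s' - ε')
            linarith [hbt'.le, le_max_right (0:ℝ) (s' - ε')]
          linarith [h5, h6.le]
        have h3 : infDist (σ₂ s') Kimg ≤ infDist (σ₂ t') Kimg + dist (σ₂ s') (σ₂ t') :=
          infDist_le_infDist_add_dist
        have h4 : infDist (σ₂ t') Kimg ≤ r := ht'W.2 t' ⟨ht'0, le_rfl⟩
        linarith
  have hgron : ∀ t' ∈ Icc (0:ℝ) τ, dist (σ₂ t') (σ₁ t') ≤ dist u₂ u₁ * exp (L * (t' - 0)) := by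
    intro t' ht'
    refine dist_le_of_trajectories_ODE_of_mem (v := fun _ x => f x) (s := fun _ => tube)
      (K := L) (fun _ _ => hL)
      (h₂.continuousOn.mono (Icc_subset_Icc le_rfl hτT))
      (fun t ht => h₂.hasDerivWithinAt_Ici ⟨ht.1, lt_of_lt_of_le ht.2 hτT⟩)
      (fun t ht => hτW t ⟨ht.1, ht.2.le⟩)
      (h₁.continuousOn.mono (Icc_subset_Icc le_rfl hτT))
      (fun t ht => h₁.hasDerivWithinAt_Ici ⟨ht.1, lt_of_lt_of_le ht.2 hτT⟩)
      (fun t ht => hσ₁tube t ⟨ht.1, ht.2.le.trans hτT⟩)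
      (by rw [h₁.1, h₂.1]) t' ht'
  have hτeq : τ = T := by
    by_contra hne
    have hτlt : τ < T := lt_of_le_of_ne hτT hne
    have hd1 : dist (σ₂ τ) (σ₁ τ) ≤ r/2 := by
      have h5 := hgron τ ⟨hτ0, le_rfl⟩
      rw [sub_zero] at h5
      have h6 : dist u₂ u₁ * exp (L * (τ - 0)) ≤ (r/2 * exp (-(L*T))) * exp (L * τ) := by
        rw [sub_zero]
        exact mul_le_mul_of_nonneg_right hd (exp_pos _).le
      have h7 : (r/2 * exp (-(L*T))) * exp (L*τ) = r/2 * exp (L*τ - L*T) := by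
        rw [mul_assoc, ← exp_add]
        ring_nf
      have h8 : exp ((L:ℝ)*τ - L*T) ≤ 1 := exp_le_one_iff.mpr
        (by nlinarith [NNReal.coe_nonneg L])
      rw [sub_zero] at h6
      have h9 : r/2 * exp ((L:ℝ)*τ - (L:ℝ)*T) ≤ r/2 * 1 :=
        mul_le_mul_of_nonneg_left h8 (by linarith)
      calc dist (σ₂ τ) (σ₁ τ) ≤ dist u₂ u₁ * exp ((L:ℝ) * τ) := h5
      _ ≤ r/2 * exp (-((L:ℝ)*T)) * exp ((L:ℝ)*τ) := h6
      _ = r/2 * exp ((L:ℝ)*τ - (L:ℝ)*T) := h7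
      _ ≤ r/2 * 1 := h9
      _ = r/2 := mul_one _
    set t'' := min (τ + r/2) T with ht''
    have ht''W : t'' ∈ W := by
      refine ⟨⟨le_trans hτ0 (le_min (by linarith) hτT), min_le_right _ _⟩, fun s' hs' => ?_⟩
      rcases le_or_gt s' τ with hsτ | hsτ
      · exact hτW s' ⟨hs'.1, hsτ⟩
      · show infDist (σ₂ s') Kimg ≤ r
        have hs'T : s' ≤ T := hs'.2.trans (min_le_right _ _)
        have h9 : dist (σ₂ s') (σ₂ τ) ≤ s' - τ := by
          rw [dist_eq_norm]
          have h5 := h₂.norm_sub_le hb ⟨hs'.1, hs'T⟩ ⟨hτ0, hτT⟩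
          have h6 : |s' - τ| = s' - τ := abs_of_nonneg (by linarith)
          linarith [h5, h6.le]
        have h10 : infDist (σ₂ s') Kimg ≤ infDist (σ₂ τ) Kimg + dist (σ₂ s') (σ₂ τ) :=
          infDist_le_infDist_add_dist
        have h11 : infDist (σ₂ τ) Kimg ≤ dist (σ₂ τ) (σ₁ τ) + infDist (σ₁ τ) Kimg := by
          have h12 : infDist (σ₂ τ) Kimg ≤ infDist (σ₁ τ) Kimg + dist (σ₂ τ) (σ₁ τ) :=
            infDist_le_infDist_add_dist
          linarith
        have h13 : infDist (σ₁ τ) Kimg = 0 :=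
          infDist_zero_of_mem (mem_image_of_mem σ₁ ⟨hτ0, hτT⟩)
        have h14 : s' - τ ≤ r/2 := by
          have := hs'.2
          have := min_le_left (τ + r/2) T
          linarith [hs'.2.trans (min_le_left (τ + r/2) T)]
        linarith
    have hc1 : t'' ≤ τ := le_csSup hWbdd ht''W
    have hc2 : τ < t'' := lt_min (by linarith) hτlt
    linarith
  intro t ht
  have := hgron t (by rw [hτeq]; exact ht)
  simpa using this

theorem Sol.unique {f : X → X} (hb : ∀ x, ‖f x‖ ≤ 1) (hl : LocallyLipschitz f) {T : ℝ}
    (hT : 0 ≤ T) {u : X} {σ₁ σ₂ : ℝ → X} (h₁ : Sol f T u σ₁) (h₂ : Sol f T u σ₂) :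
    EqOn σ₂ σ₁ (Icc 0 T) := by
  have hKc : IsCompact (σ₁ '' Icc 0 T) :=
    isCompact_Icc.image_of_continuousOn h₁.continuousOn
  have hKne : (σ₁ '' Icc 0 T).Nonempty := ⟨σ₁ 0, mem_image_of_mem σ₁ ⟨le_rfl, hT⟩⟩
  obtain ⟨r, hr, L, hL⟩ := exists_lipschitzOnWith_tube hb hl hKc hKne
  have hkey := dist_le_of_sol hb hT h₁ h₂ hr hL
    (by rw [dist_self]; positivity)
  intro t ht
  have h2 := hkey t ht
  rw [dist_self, zero_mul] at h2
  exact dist_le_zero.mp h2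

theorem exists_sol {f : X → X} [CompleteSpace X] (hb : ∀ x, ‖f x‖ ≤ 1) (hl : LocallyLipschitz f)
    (u : X) {T : ℝ} (hT : 0 ≤ T) : ∃ σ, Sol f T u σ := by
  set J := {t : ℝ | t ∈ Icc 0 T ∧ ∃ σ, Sol f t u σ} with hJ
  have h0J : (0:ℝ) ∈ J := ⟨⟨le_rfl, hT⟩, _, sol_zero u⟩
  have hJne : J.Nonempty := ⟨0, h0J⟩
  have hJbdd : BddAbove J := ⟨T, fun t ht => ht.1.2⟩
  set τ := sSup J with hτdef
  have hτ0 : 0 ≤ τ := le_csSup hJbdd h0J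
  have hτT : τ ≤ T := csSup_le hJne fun t ht => ht.1.2
  have hend : ∀ t (ht : t ∈ J) t' (ht' : t' ∈ J), t ≤ t' →
      dist (Exists.choose ht.2 t) (Exists.choose ht'.2 t') ≤ t' - t := by
    intro t ht t' ht' htt'
    have hσ : Sol f t u (Exists.choose ht.2) := Exists.choose_spec ht.2
    have hσ' : Sol f t' u (Exists.choose ht'.2) := Exists.choose_spec ht'.2
    have heq := Sol.unique hb hl ht.1.1 hσ (hσ'.mono htt')
    have h1 : Exists.choose ht.2 t = Exists.choose ht'.2 t :=
      (heq ⟨ht.1.1, le_rfl⟩).symm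
    rw [h1, dist_eq_norm]
    have h2 := hσ'.norm_sub_le hb (s := t) (t := t')
      ⟨ht.1.1, htt'⟩ ⟨ht'.1.1, le_rfl⟩
    have h3 : |t - t'| = t' - t := by rw [abs_sub_comm]; exact abs_of_nonneg (by linarith)
    linarith
  have hseq : ∀ n : ℕ, ∃ t, t ∈ J ∧ τ - 1/(n+1) < t := by
    intro n
    have hlt : τ - 1/((n:ℝ)+1) < τ := by
      have : (0:ℝ) < 1/((n:ℝ)+1) := by positivity
      linarith
    obtain ⟨t, htJ, hlt'⟩ := exists_lt_of_lt_csSup hJne hlt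
    exact ⟨t, htJ, hlt'⟩
  choose tn htnJ htngt using hseq
  have htnle : ∀ n, tn n ≤ τ := fun n => le_csSup hJbdd (htnJ n)
  have hcauchy : CauchySeq (fun n => Exists.choose (htnJ n).2 (tn n)) := by
    refine cauchySeq_of_le_tendsto_0 (fun N => 2/((N:ℝ)+1)) (fun n m N hn hm => ?_) ?_
    · have hmono : ∀ (a : ℕ), N ≤ a → τ - 1/((N:ℝ)+1) < tn a := by
        intro a ha
        have h4 : 1/((a:ℝ)+1) ≤ 1/((N:ℝ)+1) :=
          one_div_le_one_div_of_le (by positivity) (by exact_mod_cast Nat.succ_le_succ ha)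
        have := htngt a
        linarith
      rcases le_total (tn n) (tn m) with hnm | hnm
      · have := hend _ (htnJ n) _ (htnJ m) hnm
        have h5 := hmono n hn
        have h6 := htnle m
        refine this.trans ?_
        have h7 : (0:ℝ) < 1/((N:ℝ)+1) := by positivity
        have h8 : 2/((N:ℝ)+1) = 2*(1/((N:ℝ)+1)) := by ring
        show tn m - tn n ≤ 2/((N:ℝ)+1)
        linarith
      · have := hend _ (htnJ m) _ (htnJ n) hnm
        rw [dist_comm]
        have h5 := hmono m hm
        have h6 := htnle n
        refine this.trans ?_
        have h7 : (0:ℝ) < 1/((N:ℝ)+1) := by positivity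
        have h8 : 2/((N:ℝ)+1) = 2*(1/((N:ℝ)+1)) := by ring
        show tn n - tn m ≤ 2/((N:ℝ)+1)
        linarith
    · have : (fun N : ℕ => 2/((N:ℝ)+1)) = (fun N : ℕ => 2 * (1/((N:ℝ)+1))) := by
        funext N; ring
      rw [this]
      simpa using (tendsto_one_div_add_atTop_nhds_zero_nat.const_mul (2:ℝ))
  obtain ⟨xstar, hxstar⟩ := cauchySeq_tendsto_of_complete hcauchy
  obtain ⟨R, hR, hloc⟩ := exists_local_sol hb hl xstar
  obtain ⟨n₁, hn₁⟩ := exists_nat_one_div_lt (show (0:ℝ) < R/2 by linarith)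
  obtain ⟨n₂, hn₂⟩ := (Metric.tendsto_atTop.mp hxstar) (R/2) (by linarith)
  set n := max n₁ n₂ with hn
  have h1n : 1/((n:ℝ)+1) < R/2 := by
    have h4 : 1/((n:ℝ)+1) ≤ 1/((n₁:ℝ)+1) :=
      one_div_le_one_div_of_le (by positivity)
        (by exact_mod_cast Nat.succ_le_succ (le_max_left n₁ n₂))
    linarith
  have h2n : dist (Exists.choose (htnJ n).2 (tn n)) xstar < R/2 :=
    hn₂ n (le_max_right n₁ n₂)
  have ht₁J : tn n ∈ J := htnJ n
  have hσ₁ : Sol f (tn n) u (Exists.choose ht₁J.2) := Exists.choose_spec ht₁J.2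
  have hx₁ : Exists.choose ht₁J.2 (tn n) ∈ closedBall xstar R := by
    rw [mem_closedBall]
    have := h2n
    linarith
  obtain ⟨γ, hγ0, hγd⟩ := hloc (Exists.choose ht₁J.2 (tn n)) hx₁ (tn n)
  have ht₁0 : 0 ≤ tn n := ht₁J.1.1
  have ht₁T : tn n ≤ T := ht₁J.1.2
  set c := min (tn n + R) T with hcdef
  have ht₁c : tn n ≤ c := le_min (by linarith) ht₁T
  have hcle : c ≤ tn n + R := by rw [hcdef]; exact min_le_left _ _
  have hcT : c ≤ T := by rw [hcdef]; exact min_le_right _ _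
  have hglue := hσ₁.glue ht₁0 hγ0
    (fun t (ht : t ∈ Icc (tn n) c) =>
      (hγd t ⟨by linarith [ht.1], ht.2.trans hcle⟩).mono
      (Icc_subset_Icc (by linarith) hcle))
  have hcJ : c ∈ J := ⟨⟨le_trans ht₁0 ht₁c, hcT⟩, _, hglue⟩
  have hcτ : c ≤ τ := le_csSup hJbdd hcJ
  have hτt₁ : τ - tn n < R/2 := by
    have := htngt n
    linarith
  rcases le_or_gt (tn n + R) T with hle | hgt
  · exfalso
    have hceq : c = tn n + R := min_eq_left hle
    rw [hceq] at hcτ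
    linarith
  · have hceq : c = T := min_eq_right hgt.le
    rw [hceq] at hglue
    exact ⟨_, hglue⟩

theorem Sol.reverse {f : X → X} {T : ℝ} {u : X} {σ : ℝ → X} (h : Sol f T u σ) :
    Sol (fun x => -f x) T (σ T) (fun t => σ (T - t)) := by
  refine ⟨by simp, fun t ht => ?_⟩
  have hmem : T - t ∈ Icc (0:ℝ) T := ⟨by linarith [ht.2], by linarith [ht.1]⟩
  have hσd := h.2 (T - t) hmem
  have hh : HasDerivWithinAt (fun s' : ℝ => T - s') (-1) (Icc 0 T) t :=
    ((hasDerivAt_id t).const_sub T).hasDerivWithinAt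
  have hmaps : MapsTo (fun s' : ℝ => T - s') (Icc (0:ℝ) T) (Icc (0:ℝ) T) := fun s' hs' =>
    ⟨by show (0:ℝ) ≤ T - s'; linarith [hs'.2], by show T - s' ≤ T; linarith [hs'.1]⟩
  have hcomp := HasDerivWithinAt.scomp t hσd hh hmaps
  simpa [Function.comp_def] using hcomp

theorem exists_homeo {f : X → X} [CompleteSpace X] (hb : ∀ x, ‖f x‖ ≤ 1)
    (hl : LocallyLipschitz f) {T : ℝ} (hT : 0 ≤ T) :
    ∃ η : X ≃ₜ X, ∀ u, ∃ σ, Sol f T u σ ∧ η u = σ T := by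
  classical
  have hb' : ∀ x, ‖(fun x => -f x) x‖ ≤ 1 := fun x => by simpa using hb x
  have hl' : LocallyLipschitz fun x => -f x := by
    have heq : (fun x => -f x) = (fun y : X => -y) ∘ f := rfl
    have hneg : LipschitzWith 1 (fun y : X => -y) :=
      LipschitzWith.of_dist_le_mul fun x y => by
        rw [dist_neg_neg]; simp
    rw [heq]
    exact hneg.locallyLipschitz.comp hl
  have hcont : ∀ (g : X → X) (hbg : ∀ x, ‖g x‖ ≤ 1) (hlg : LocallyLipschitz g),
      Continuous (fun u => (exists_sol hbg hlg u hT).choose T) := by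
    intro g hbg hlg
    rw [continuous_iff_continuousAt]
    intro u
    rw [Metric.continuousAt_iff]
    intro ε' hε'
    have hσ₁ : Sol g T u ((exists_sol hbg hlg u hT).choose) :=
      (exists_sol hbg hlg u hT).choose_spec
    have hKc : IsCompact ((exists_sol hbg hlg u hT).choose '' Icc 0 T) :=
      isCompact_Icc.image_of_continuousOn hσ₁.continuousOn
    have hKne : ((exists_sol hbg hlg u hT).choose '' Icc 0 T).Nonempty :=
      ⟨_, mem_image_of_mem _ (⟨le_rfl, hT⟩ : (0:ℝ) ∈ Icc (0:ℝ) T)⟩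
    obtain ⟨r, hr, L, hL⟩ := exists_lipschitzOnWith_tube hbg hlg hKc hKne
    have hpos : 0 < min (r/2 * exp (-((L:ℝ)*T))) ((ε'/2) * exp (-((L:ℝ)*T))) :=
      lt_min (mul_pos (by linarith) (exp_pos _)) (mul_pos (by linarith) (exp_pos _))
    refine ⟨_, hpos, fun {u₂} hu₂ => ?_⟩
    have hσ₂ : Sol g T u₂ ((exists_sol hbg hlg u₂ hT).choose) :=
      (exists_sol hbg hlg u₂ hT).choose_spec
    have hd : dist u₂ u ≤ r/2 * exp (-((L:ℝ)*T)) :=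
      le_trans hu₂.le (min_le_left _ _)
    have hkey := dist_le_of_sol hbg hT hσ₁ hσ₂ hr hL hd T ⟨hT, le_rfl⟩
    have h1 : dist u₂ u * exp ((L:ℝ)*T) ≤ ((ε'/2) * exp (-((L:ℝ)*T))) * exp ((L:ℝ)*T) :=
      mul_le_mul_of_nonneg_right (le_trans hu₂.le (min_le_right _ _)) (exp_pos _).le
    have h2 : ((ε'/2) * exp (-((L:ℝ)*T))) * exp ((L:ℝ)*T) = ε'/2 := by
      rw [mul_assoc, ← exp_add, neg_add_cancel, exp_zero, mul_one]
    calc dist ((exists_sol hbg hlg u₂ hT).choose T) ((exists_sol hbg hlg u hT).choose T)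
        ≤ dist u₂ u * exp ((L:ℝ)*T) := hkey
    _ ≤ ε'/2 := by rw [← h2]; exact h1
    _ < ε' := by linarith
  set F : X → X := fun u => (exists_sol hb hl u hT).choose T with hF
  set G : X → X := fun u => (exists_sol hb' hl' u hT).choose T with hG
  have hFsol : ∀ u, Sol f T u ((exists_sol hb hl u hT).choose) :=
    fun u => (exists_sol hb hl u hT).choose_spec
  have hGsol : ∀ u, Sol (fun x => -f x) T u ((exists_sol hb' hl' u hT).choose) :=
    fun u => (exists_sol hb' hl' u hT).choose_spec
  have hT2 : T ∈ Icc (0:ℝ) T := ⟨hT, le_rfl⟩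
  have hGF : ∀ u, G (F u) = u := by
    intro u
    have hrev : Sol (fun x => -f x) T (F u)
        (fun t => (exists_sol hb hl u hT).choose (T - t)) := (hFsol u).reverse
    have hequ := Sol.unique hb' hl' hT hrev (hGsol (F u))
    have h9 := hequ hT2
    calc G (F u) = (exists_sol hb' hl' (F u) hT).choose T := rfl
    _ = (exists_sol hb hl u hT).choose (T - T) := h9
    _ = u := by rw [sub_self]; exact (hFsol u).1
  have hFG : ∀ u, F (G u) = u := by
    intro u
    have hrev0 := (hGsol u).reverse
    have hneg : (fun x : X => -(fun y : X => -f y) x) = f := by funext x; simp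
    rw [hneg] at hrev0
    have hequ := Sol.unique hb hl hT hrev0 (hFsol (G u))
    have h9 := hequ hT2
    calc F (G u) = (exists_sol hb hl (G u) hT).choose T := rfl
    _ = (exists_sol hb' hl' u hT).choose (T - T) := h9
    _ = u := by rw [sub_self]; exact (hGsol u).1
  exact ⟨⟨⟨F, G, hGF, hFG⟩, hcont f hb hl, hcont (fun x => -f x) hb' hl'⟩,
    fun u => ⟨_, hFsol u, rfl⟩⟩

theorem clamp_lip (x y : ℝ) : |max 0 (min 1 x) - max 0 (min 1 y)| ≤ |x - y| := by
  have h1 : |max 0 (min 1 x) - max 0 (min 1 y)| ≤ |min 1 x - min 1 y| := by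
    rw [max_comm 0 (min 1 x), max_comm 0 (min 1 y)]
    exact abs_max_sub_max_le_abs _ _ _
  have h2 : |min 1 x - min 1 y| ≤ max |1 - 1| |x - y| := abs_min_sub_min_le_max 1 x 1 y
  rw [sub_self, abs_zero, max_eq_right (abs_nonneg _)] at h2
  exact h1.trans h2

theorem clamp_nonneg (x : ℝ) : 0 ≤ max 0 (min 1 x) := le_max_left _ _

theorem clamp_le_one (x : ℝ) : max 0 (min 1 x) ≤ 1 := max_le zero_le_one (min_le_left _ _)

theorem clamp_eq_one {x : ℝ} (h : 1 ≤ x) : max 0 (min 1 x) = 1 := by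
  rw [min_eq_left h]; exact max_eq_right zero_le_one

theorem clamp_pos {x : ℝ} (h : 0 < max 0 (min 1 x)) : 0 < x := by
  by_contra hx
  push_neg at hx
  have h2 : min 1 x ≤ 0 := le_trans (min_le_right _ _) hx
  rw [max_eq_left h2] at h
  exact lt_irrefl 0 h

theorem norm_smul_sub_smul_le {E : Type*} [NormedAddCommGroup E] [NormedSpace ℝ E]
    {g₁ g₂ : ℝ} {w₁ w₂ : E} {Kg Kw Mg Mw d : ℝ}
    (hg : |g₁ - g₂| ≤ Kg * d) (hw : ‖w₁ - w₂‖ ≤ Kw * d)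
    (hMg : |g₁| ≤ Mg) (hMw : ‖w₂‖ ≤ Mw) :
    ‖g₁ • w₁ - g₂ • w₂‖ ≤ (Kg * Mw + Mg * Kw) * d := by
  have h1 : g₁ • w₁ - g₂ • w₂ = g₁ • (w₁ - w₂) + (g₁ - g₂) • w₂ := by
    rw [smul_sub, sub_smul]; abel
  rw [h1]
  have h2 : ‖g₁ • (w₁ - w₂)‖ ≤ Mg * (Kw * d) := by
    rw [norm_smul, Real.norm_eq_abs]
    exact mul_le_mul hMg hw (norm_nonneg _) (le_trans (abs_nonneg _) hMg)
  have h3 : ‖(g₁ - g₂) • w₂‖ ≤ (Kg * d) * Mw := by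
    rw [norm_smul, Real.norm_eq_abs]
    exact mul_le_mul hg hMw (norm_nonneg _) (le_trans (abs_nonneg _) hg)
  calc ‖g₁ • (w₁ - w₂) + (g₁ - g₂) • w₂‖
      ≤ ‖g₁ • (w₁ - w₂)‖ + ‖(g₁ - g₂) • w₂‖ := norm_add_le _ _
  _ ≤ Mg * (Kw * d) + (Kg * d) * Mw := add_le_add h2 h3
  _ = (Kg * Mw + Mg * Kw) * d := by ring

theorem descent_mvt {g g' : ℝ → ℝ} {a b C : ℝ} (hab : a < b)
    (hc : ContinuousOn g (Icc a b)) (hd : ∀ x ∈ Ioo a b, HasDerivAt g (g' x) x)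
    (hC : ∀ x ∈ Ioo a b, g' x ≤ C) : g b ≤ g a + C * (b - a) := by
  obtain ⟨c', hc', heq⟩ := exists_hasDerivAt_eq_slope g g' hab hc hd
  have h1 : (g b - g a) / (b - a) ≤ C := heq ▸ hC c' hc'
  have h2 : 0 < b - a := by linarith
  have h3 : g b - g a ≤ C * (b - a) := by
    rw [div_le_iff₀ h2] at h1
    linarith
  linarith

theorem locallyLipschitz_of_balls {Y : Type*} [PseudoMetricSpace Y] {f : X → Y}
    (h : ∀ x : X, ∃ r > 0, ∃ C : ℝ,
      ∀ y ∈ ball x r, ∀ z ∈ ball x r, dist (f y) (f z) ≤ C * dist y z) :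
    LocallyLipschitz f := by
  intro x
  obtain ⟨r, hr, C, hC⟩ := h x
  refine ⟨C.toNNReal, ball x r, ball_mem_nhds _ hr,
    LipschitzOnWith.of_dist_le_mul fun y hy z hz => ?_⟩
  refine (hC y hy z hz).trans ?_
  rw [Real.coe_toNNReal']
  exact mul_le_mul_of_nonneg_right (le_max_left _ _) dist_nonneg

end WQD

set_option maxHeartbeats 2000000 in
open WQD in
/-- Willem's quantitative deformation lemma. -/
theorem willem_quantitative_deformation
    {X : Type*} [NormedAddCommGroup X] [NormedSpace ℝ X] [CompleteSpace X]
    (φ : X → ℝ) (hφ : ContDiff ℝ 1 φ) (S : Set X) (c ε δ : ℝ)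
    (hε : 0 < ε) (hδ : 0 < δ)
    (h : ∀ u : X, φ u ∈ Set.Icc (c - 2*ε) (c + 2*ε) →
      (Metric.closedBall u (2*δ) ∩ S).Nonempty → 8*ε/δ ≤ ‖fderiv ℝ φ u‖) :
    ∃ η : X ≃ₜ X,
      (∀ u, φ (η u) ≤ φ u) ∧
      (∀ u, (φ u ∉ Set.Icc (c - 2*ε) (c + 2*ε) ∨ Metric.closedBall u (2*δ) ∩ S = ∅) →
        η u = u) ∧
      (∀ u ∈ S, φ u ≤ c + ε → φ (η u) ≤ c - ε) ∧
      (∀ u, ‖η u - u‖ ≤ δ) := by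
  classical
  rcases Set.eq_empty_or_nonempty S with hSe | hSne
  · refine ⟨Homeomorph.refl X, fun u => le_rfl, fun u _ => rfl, fun u hu _ => ?_,
      fun u => by simpa using hδ.le⟩
    rw [hSe] at hu
    exact absurd hu (Set.notMem_empty u)
  set m := 8*ε/δ with hm
  have hmpos : 0 < m := by rw [hm]; positivity
  set D := fderiv ℝ φ with hD
  have hDcont : Continuous D := hφ.continuous_fderiv one_ne_zero
  have hφdiff : Differentiable ℝ φ := hφ.differentiable one_ne_zero
  set A := {u : X | |φ u - c| ≤ 2*ε ∧ infDist u S ≤ 3*δ/2} with hA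
  have hAclosed : IsClosed A := by
    have h1 : IsClosed {u : X | |φ u - c| ≤ 2*ε} :=
      isClosed_le ((hφ.continuous.sub continuous_const).abs) continuous_const
    have h2 : IsClosed {u : X | infDist u S ≤ 3*δ/2} :=
      isClosed_le (continuous_infDist_pt S) continuous_const
    have : A = {u : X | |φ u - c| ≤ 2*ε} ∩ {u : X | infDist u S ≤ 3*δ/2} := by
      rw [hA]; ext u; simp [Set.mem_setOf_eq, Set.mem_inter_iff]
    rw [this]
    exact h1.inter h2
  have hAD : ∀ u ∈ A, m ≤ ‖D u‖ := by
    intro u hu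
    apply h u
    · rw [Set.mem_Icc]
      have := abs_le.mp hu.1
      constructor <;> linarith [this.1, this.2]
    · have hlt : infDist u S < 2*δ := lt_of_le_of_lt hu.2 (by linarith)
      obtain ⟨s', hs'S, hds⟩ := (infDist_lt_iff hSne).mp hlt
      exact ⟨s', Set.mem_inter (mem_closedBall.mpr (by rw [dist_comm]; exact hds.le)) hs'S⟩
  -- choose almost-norming directions
  have hy : ∀ a : A, ∃ yv : X, ‖yv‖ ≤ 1 ∧ (3/4)*m < D a yv := by
    intro a
    have h1 : m ≤ ‖D (a:X)‖ := hAD a a.2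
    have h2 : (3/4)*‖D (a:X)‖ < ‖D (a:X)‖ := by nlinarith
    obtain ⟨x, hx1, hx2⟩ := (D (a:X)).exists_lt_apply_of_lt_opNorm h2
    rw [Real.norm_eq_abs] at hx2
    rcases le_or_gt 0 (D (a:X) x) with hpos | hneg
    · rw [abs_of_nonneg hpos] at hx2
      exact ⟨x, hx1.le, by nlinarith⟩
    · refine ⟨-x, by simpa using hx1.le, ?_⟩
      rw [map_neg]
      rw [abs_of_neg hneg] at hx2
      nlinarith
  choose y hy1 hy2 using hy
  set U : A → Set X := fun a => {u : X | m/2 < D u (y a)} with hU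
  have hUopen : ∀ a, IsOpen (U a) := by
    intro a
    have hc : Continuous fun u => D u (y a) :=
      (ContinuousLinearMap.apply ℝ ℝ (y a)).continuous.comp hDcont
    exact isOpen_lt continuous_const hc
  have hAcover : A ⊆ ⋃ a : A, U a := by
    intro u hu
    refine Set.mem_iUnion.mpr ⟨⟨u, hu⟩, ?_⟩
    show m/2 < D u (y ⟨u, hu⟩)
    have := hy2 ⟨u, hu⟩
    nlinarith
  obtain ⟨V, hVopen, hAV, hVlf, hVU⟩ := precise_refinement_set hAclosed U hUopen hAcover
  set ρ : A → X → ℝ := fun i u => if (V i)ᶜ = ∅ then 1 else infDist u (V i)ᶜ with hρ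
  have hρnonneg : ∀ i u, 0 ≤ ρ i u := fun i u => by
    rw [hρ]; dsimp only; split
    · norm_num
    · exact infDist_nonneg
  have hρlip : ∀ i (u u' : X), |ρ i u - ρ i u'| ≤ dist u u' := by
    intro i u u'
    rw [hρ]; dsimp only; split
    · simpa using dist_nonneg (x := u) (y := u')
    · have := (lipschitz_infDist_pt ((V i)ᶜ)).dist_le_mul u u'
      rwa [Real.dist_eq, NNReal.coe_one, one_mul] at this
  have hρmem : ∀ i u, ρ i u ≠ 0 → u ∈ V i := by
    intro i u hne
    rw [hρ] at hne; dsimp only at hne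
    by_cases hc : (V i)ᶜ = ∅
    · have : V i = Set.univ := by rwa [compl_empty_iff] at hc
      rw [this]; trivial
    · rw [if_neg hc] at hne
      by_contra hmem
      exact hne (infDist_zero_of_mem hmem)
  have hρpos : ∀ i u, u ∈ V i → 0 < ρ i u := by
    intro i u hu
    rw [hρ]; dsimp only; split
    · norm_num
    · next hc =>
      rw [← Ne, ← Set.nonempty_iff_ne_empty] at hc
      exact ((hVopen i).isClosed_compl.notMem_iff_infDist_pos hc).mp (by simp [hu])
  set N := ⋃ i, V i with hN
  have hNopen : IsOpen N := isOpen_iUnion hVopen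
  have hAN : A ⊆ N := hAV
  have hkeyW : ∀ x₀ : X, ∃ w₀ > 0, ∃ Fs : Finset A,
      ∀ u ∈ ball x₀ w₀, (Function.support fun i => ρ i u) ⊆ ↑Fs := by
    intro x₀
    obtain ⟨W, hWnhds, hWfin⟩ := hVlf x₀
    obtain ⟨w₀, hw₀, hballW⟩ := Metric.mem_nhds_iff.mp hWnhds
    refine ⟨w₀, hw₀, hWfin.toFinset, fun u hu i hi => ?_⟩
    simp only [Finset.mem_coe, Set.Finite.mem_toFinset]
    exact ⟨u, hρmem i u hi, hballW hu⟩
  set num : X → X := fun u => ∑ᶠ i, ρ i u • y i with hnum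
  set den : X → ℝ := fun u => ∑ᶠ i, ρ i u with hden
  have hsuppv : ∀ (u : X) (Fs : Finset A),
      ((Function.support fun i => ρ i u) ⊆ ↑Fs) →
      (Function.support fun i => ρ i u • y i) ⊆ ↑Fs := by
    intro u Fs hFs i hi
    apply hFs
    intro h0
    apply hi
    have h0' : ρ i u = 0 := h0
    show ρ i u • y i = 0
    rw [h0', zero_smul]
  have hlocal : ∀ u : X, ∃ Fs : Finset A,
      ((Function.support fun i => ρ i u) ⊆ ↑Fs) ∧
      num u = ∑ i ∈ Fs, ρ i u • y i ∧ den u = ∑ i ∈ Fs, ρ i u := by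
    intro u
    obtain ⟨w₀, hw₀, Fs, hFs⟩ := hkeyW u
    have h1 := hFs u (mem_ball_self hw₀)
    exact ⟨Fs, h1, finsum_eq_sum_of_support_subset _ (hsuppv u Fs h1),
      finsum_eq_sum_of_support_subset _ h1⟩
  have hdennonneg : ∀ u, 0 ≤ den u := by
    intro u
    obtain ⟨Fs, _, _, hd⟩ := hlocal u
    rw [hd]
    exact Finset.sum_nonneg fun i _ => hρnonneg i u
  have hnumden : ∀ u, ‖num u‖ ≤ den u := by
    intro u
    obtain ⟨Fs, _, hn, hd⟩ := hlocal u
    rw [hn, hd]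
    refine (norm_sum_le _ _).trans (Finset.sum_le_sum fun i _ => ?_)
    rw [norm_smul, Real.norm_eq_abs, abs_of_nonneg (hρnonneg i u)]
    calc ρ i u * ‖y i‖ ≤ ρ i u * 1 :=
      mul_le_mul_of_nonneg_left (hy1 i) (hρnonneg i u)
    _ = ρ i u := mul_one _
  have hDnum : ∀ u, m/2 * den u ≤ D u (num u) := by
    intro u
    obtain ⟨Fs, _, hn, hd⟩ := hlocal u
    rw [hn, hd, map_sum, Finset.mul_sum]
    refine Finset.sum_le_sum fun i _ => ?_
    rw [map_smul, smul_eq_mul]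
    rcases eq_or_lt_of_le (hρnonneg i u) with h0 | hpos
    · rw [← h0]; ring_nf; exact le_rfl
    · have hiU : u ∈ U i := hVU i (hρmem i u hpos.ne')
      have : m/2 < D u (y i) := hiU
      rw [mul_comm (m/2)]
      exact mul_le_mul_of_nonneg_left this.le (hρnonneg i u)
  have hdenpos : ∀ u ∈ N, 0 < den u := by
    intro u hu
    obtain ⟨i₀, hi₀⟩ := Set.mem_iUnion.mp hu
    obtain ⟨Fs, hsupp, _, hd⟩ := hlocal u
    have hρi₀ : 0 < ρ i₀ u := hρpos i₀ u hi₀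
    have hi₀Fs : i₀ ∈ Fs := hsupp hρi₀.ne'
    rw [hd]
    calc (0:ℝ) < ρ i₀ u := hρi₀
    _ ≤ ∑ i ∈ Fs, ρ i u := Finset.single_le_sum (fun i _ => hρnonneg i u) hi₀Fs
  set wv : X → X := fun u => (den u)⁻¹ • num u with hwv
  set ψ : X → ℝ := fun u =>
    (max 0 (min 1 (2 - |φ u - c|/ε))) * (max 0 (min 1 (3 - 2*infDist u S/δ))) with hψ
  have hψnonneg : ∀ u, 0 ≤ ψ u := fun u =>
    mul_nonneg (clamp_nonneg _) (clamp_nonneg _)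
  have hψle : ∀ u, ψ u ≤ 1 := fun u =>
    mul_le_one₀ (clamp_le_one _) (clamp_nonneg _) (clamp_le_one _)
  have hψA : ∀ u, ψ u ≠ 0 → u ∈ A := by
    intro u hne
    have h1 : 0 < ψ u := lt_of_le_of_ne (hψnonneg u) (Ne.symm hne)
    have h2 : 0 < max 0 (min 1 (2 - |φ u - c|/ε)) := by
      rcases (mul_pos_iff.mp h1) with ⟨ha, _⟩ | ⟨ha, hb⟩
      · exact ha
      · exact absurd hb (not_lt.mpr (clamp_nonneg _))
    have h3 : 0 < max 0 (min 1 (3 - 2*infDist u S/δ)) := by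
      rcases (mul_pos_iff.mp h1) with ⟨_, hb⟩ | ⟨ha, hb⟩
      · exact hb
      · exact absurd hb (not_lt.mpr (clamp_nonneg _))
    have h4 := clamp_pos h2
    have h5 := clamp_pos h3
    constructor
    · have : |φ u - c|/ε < 2 := by linarith
      have := (div_lt_iff₀ hε).mp this
      linarith
    · have : 2*infDist u S/δ < 3 := by linarith
      have := (div_lt_iff₀ hδ).mp this
      linarith
  have hψ1 : ∀ u, |φ u - c| ≤ ε → infDist u S ≤ δ → ψ u = 1 := by
    intro u h1 h2
    have ha : (1:ℝ) ≤ 2 - |φ u - c|/ε := by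
      have : |φ u - c|/ε ≤ 1 := (div_le_one hε).mpr h1
      linarith
    have hb : (1:ℝ) ≤ 3 - 2*infDist u S/δ := by
      have h3 : 2*infDist u S/δ ≤ 2 := by
        rw [div_le_iff₀ hδ]
        linarith
      linarith
    rw [hψ]; dsimp only
    rw [clamp_eq_one ha, clamp_eq_one hb, mul_one]
  set v : X → X := fun u => if u ∈ N then ψ u • wv u else 0 with hv
  have hwnorm : ∀ u ∈ N, ‖wv u‖ ≤ 1 := by
    intro u hu
    rw [hwv]; dsimp only
    rw [norm_smul, Real.norm_eq_abs, abs_of_nonneg (inv_nonneg.mpr (hdennonneg u))]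
    have hpos := hdenpos u hu
    calc (den u)⁻¹ * ‖num u‖ ≤ (den u)⁻¹ * den u :=
      mul_le_mul_of_nonneg_left (hnumden u) (inv_nonneg.mpr (hdennonneg u))
    _ = 1 := inv_mul_cancel₀ (ne_of_gt hpos)
  have hv1 : ∀ x, ‖v x‖ ≤ 1 := by
    intro x
    rw [hv]; dsimp only
    split
    · next hxN =>
      rw [norm_smul, Real.norm_eq_abs, abs_of_nonneg (hψnonneg x)]
      calc ψ x * ‖wv x‖ ≤ 1 * 1 :=
        mul_le_mul (hψle x) (hwnorm x hxN) (norm_nonneg _) zero_le_one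
      _ = 1 := mul_one _
    · simp
  have hDv : ∀ x ∈ N, D x (v x) = ψ x * ((den x)⁻¹ * D x (num x)) := by
    intro x hx
    rw [hv]; dsimp only
    rw [if_pos hx, hwv]; dsimp only
    rw [map_smul, map_smul, smul_eq_mul, smul_eq_mul]
  have hP3 : ∀ x, 0 ≤ D x (v x) := by
    intro x
    by_cases hx : x ∈ N
    · rw [hDv x hx]
      have h1 : 0 ≤ D x (num x) :=
        le_trans (mul_nonneg (by linarith) (hdennonneg x)) (hDnum x)
      exact mul_nonneg (hψnonneg x) (mul_nonneg (inv_nonneg.mpr (hdennonneg x)) h1)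
    · rw [hv]; dsimp only
      rw [if_neg hx, map_zero]
  have hP4 : ∀ x, ψ x = 1 → m/2 ≤ D x (v x) := by
    intro x hx1
    have hxA : x ∈ A := hψA x (by rw [hx1]; norm_num)
    have hxN : x ∈ N := hAN hxA
    rw [hDv x hxN, hx1, one_mul]
    have hpos := hdenpos x hxN
    have h1 : (den x)⁻¹ * (m/2 * den x) ≤ (den x)⁻¹ * D x (num x) :=
      mul_le_mul_of_nonneg_left (hDnum x) (inv_nonneg.mpr (hdennonneg x))
    calc m/2 = (den x)⁻¹ * (m/2 * den x) := by
          field_simp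
    _ ≤ (den x)⁻¹ * D x (num x) := h1
  have hP5 : ∀ x, x ∉ A → v x = 0 := by
    intro x hxA
    have hψ0 : ψ x = 0 := by
      by_contra hne
      exact hxA (hψA x hne)
    rw [hv]; dsimp only
    split
    · rw [hψ0, zero_smul]
    · rfl
  have hvLL : LocallyLipschitz v := by
    apply locallyLipschitz_of_balls
    intro x₀
    by_cases hx₀ : x₀ ∈ N
    · obtain ⟨w₀, hw₀pos, Fs, hFs⟩ := hkeyW x₀
      obtain ⟨Kφ, tφ, htφ, hφlip⟩ := (hφ.contDiffAt (x := x₀)).exists_lipschitzOnWith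
      obtain ⟨rφ, hrφ, hrφsub⟩ := Metric.mem_nhds_iff.mp htφ
      obtain ⟨rN, hrN, hrNsub⟩ := Metric.mem_nhds_iff.mp (hNopen.mem_nhds hx₀)
      set card : ℝ := (Fs.card : ℝ) with hcard
      have hcard0 : 0 ≤ card := Nat.cast_nonneg _
      set d₀ := den x₀ with hd₀
      have hd₀pos : 0 < d₀ := hdenpos x₀ hx₀
      set r := min (min w₀ rN) (min rφ (d₀/(2*(card+1)))) with hr
      have hrpos : 0 < r :=
        lt_min (lt_min hw₀pos hrN) (lt_min hrφ (by positivity))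
      have hsubw₀ : ball x₀ r ⊆ ball x₀ w₀ :=
        ball_subset_ball (le_trans (min_le_left _ _) (min_le_left _ _))
      have hsubN : ball x₀ r ⊆ N :=
        subset_trans (ball_subset_ball (le_trans (min_le_left _ _) (min_le_right _ _))) hrNsub
      have hsubφ : ball x₀ r ⊆ tφ :=
        subset_trans (ball_subset_ball (le_trans (min_le_right _ _) (min_le_left _ _))) hrφsub
      have hrd₀ : r ≤ d₀/(2*(card+1)) := le_trans (min_le_right _ _) (min_le_right _ _)
      -- den and num are Lipschitz on the w₀-ball
      have hdenlip : ∀ u ∈ ball x₀ w₀, ∀ u' ∈ ball x₀ w₀,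
          |den u - den u'| ≤ card * dist u u' := by
        intro u hu u' hu'
        have h1 : den u = ∑ i ∈ Fs, ρ i u :=
          finsum_eq_sum_of_support_subset _ (hFs u hu)
        have h2 : den u' = ∑ i ∈ Fs, ρ i u' :=
          finsum_eq_sum_of_support_subset _ (hFs u' hu')
        rw [h1, h2, ← Finset.sum_sub_distrib]
        refine (Finset.abs_sum_le_sum_abs _ _).trans ?_
        have h3 : ∑ i ∈ Fs, |ρ i u - ρ i u'| ≤ Fs.card • dist u u' :=
          Finset.sum_le_card_nsmul _ _ _ (fun i _ => hρlip i u u')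
        rwa [nsmul_eq_mul] at h3
      have hnumlip : ∀ u ∈ ball x₀ w₀, ∀ u' ∈ ball x₀ w₀,
          ‖num u - num u'‖ ≤ card * dist u u' := by
        intro u hu u' hu'
        have h1 : num u = ∑ i ∈ Fs, ρ i u • y i :=
          finsum_eq_sum_of_support_subset _ (hsuppv u Fs (hFs u hu))
        have h2 : num u' = ∑ i ∈ Fs, ρ i u' • y i :=
          finsum_eq_sum_of_support_subset _ (hsuppv u' Fs (hFs u' hu'))
        rw [h1, h2, ← Finset.sum_sub_distrib]
        refine (norm_sum_le _ _).trans ?_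
        have h3 : ∀ i ∈ Fs, ‖ρ i u • y i - ρ i u' • y i‖ ≤ dist u u' := by
          intro i _
          rw [← sub_smul, norm_smul, Real.norm_eq_abs]
          calc |ρ i u - ρ i u'| * ‖y i‖ ≤ dist u u' * 1 :=
            mul_le_mul (hρlip i u u') (hy1 i) (norm_nonneg _) dist_nonneg
          _ = dist u u' := mul_one _
        have h4 := Finset.sum_le_card_nsmul Fs _ (dist u u') h3
        rwa [nsmul_eq_mul] at h4
      have hden_lb : ∀ u ∈ ball x₀ r, d₀/2 ≤ den u := by
        intro u hu
        have h1 := hdenlip u (hsubw₀ hu) x₀ (mem_ball_self hw₀pos)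
        have h2 : dist u x₀ < r := mem_ball.mp hu
        have h3 : card * dist u x₀ ≤ card * r :=
          mul_le_mul_of_nonneg_left h2.le hcard0
        have h4 : card * r ≤ d₀/2 := by
          have h5 : card * r ≤ card * (d₀/(2*(card+1))) :=
            mul_le_mul_of_nonneg_left hrd₀ hcard0
          have h6 : card * (d₀/(2*(card+1))) ≤ d₀/2 := by
            have hpos2 : (0:ℝ) < 2*(card+1) := by positivity
            have hkey : card * (d₀/(2*(card+1))) = card*d₀ / (2*(card+1)) := by ring
            rw [hkey, div_le_iff₀ hpos2]
            nlinarith [hd₀pos.le, hcard0]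
          linarith
        have h7 := abs_le.mp h1
        have := h7.1
        rw [hd₀]
        linarith
      have hden_ub : ∀ u ∈ ball x₀ r, den u ≤ 2*d₀ := by
        intro u hu
        have h1 := hdenlip u (hsubw₀ hu) x₀ (mem_ball_self hw₀pos)
        have h2 : dist u x₀ < r := mem_ball.mp hu
        have h3 : card * dist u x₀ ≤ card * r :=
          mul_le_mul_of_nonneg_left h2.le hcard0
        have h4 : card * r ≤ d₀/2 := by
          have h5 : card * r ≤ card * (d₀/(2*(card+1))) :=
            mul_le_mul_of_nonneg_left hrd₀ hcard0
          have h6 : card * (d₀/(2*(card+1))) ≤ d₀/2 := by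
            have hpos2 : (0:ℝ) < 2*(card+1) := by positivity
            have hkey : card * (d₀/(2*(card+1))) = card*d₀ / (2*(card+1)) := by ring
            rw [hkey, div_le_iff₀ hpos2]
            nlinarith [hd₀pos.le, hcard0]
          linarith
        have h7 := abs_le.mp h1
        have := h7.2
        rw [hd₀]
        linarith
      have hinv_ub : ∀ u ∈ ball x₀ r, (den u)⁻¹ ≤ 2/d₀ := by
        intro u hu
        have h1 := hden_lb u hu
        have h2 : 0 < den u := lt_of_lt_of_le (by positivity) h1
        rw [inv_le_iff_one_le_mul₀ h2, div_mul_eq_mul_div, le_div_iff₀ hd₀pos]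
        linarith
      have hinvlip : ∀ u ∈ ball x₀ r, ∀ u' ∈ ball x₀ r,
          |(den u)⁻¹ - (den u')⁻¹| ≤ (card * (2/d₀) * (2/d₀)) * dist u u' := by
        intro u hu u' hu'
        have hau := hden_lb u hu
        have hau' := hden_lb u' hu'
        have hpu : 0 < den u := lt_of_lt_of_le (by positivity) hau
        have hpu' : 0 < den u' := lt_of_lt_of_le (by positivity) hau'
        have heq : (den u)⁻¹ - (den u')⁻¹ = (den u' - den u) * ((den u)⁻¹ * (den u')⁻¹) := by
          field_simp
        rw [heq, abs_mul, abs_mul, abs_of_nonneg (inv_nonneg.mpr hpu.le),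
          abs_of_nonneg (inv_nonneg.mpr hpu'.le)]
        have h1 : |den u' - den u| ≤ card * dist u u' := by
          rw [abs_sub_comm]
          exact hdenlip u (hsubw₀ hu) u' (hsubw₀ hu')
        have h2 := hinv_ub u hu
        have h3 := hinv_ub u' hu'
        have h4 : (0:ℝ) ≤ (den u)⁻¹ := inv_nonneg.mpr hpu.le
        have h5 : (0:ℝ) ≤ (den u')⁻¹ := inv_nonneg.mpr hpu'.le
        have h6 : (den u)⁻¹ * (den u')⁻¹ ≤ (2/d₀) * (2/d₀) :=
          mul_le_mul h2 h3 h5 (by positivity)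
        calc |den u' - den u| * ((den u)⁻¹ * (den u')⁻¹)
            ≤ (card * dist u u') * ((2/d₀) * (2/d₀)) :=
          mul_le_mul h1 h6 (mul_nonneg h4 h5) (by positivity)
        _ = (card * (2/d₀) * (2/d₀)) * dist u u' := by ring
      have hwlip : ∀ u ∈ ball x₀ r, ∀ u' ∈ ball x₀ r,
          ‖wv u - wv u'‖ ≤ ((card * (2/d₀) * (2/d₀)) * (2*d₀) + (2/d₀) * card) * dist u u' := by
        intro u hu u' hu'
        have h1 : wv u = (den u)⁻¹ • num u := rfl
        have h2 : wv u' = (den u')⁻¹ • num u' := rfl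
        rw [h1, h2]
        refine norm_smul_sub_smul_le (hinvlip u hu u' hu')
          (hnumlip u (hsubw₀ hu) u' (hsubw₀ hu'))
          ?_ ?_
        · rw [abs_of_nonneg (inv_nonneg.mpr (hdennonneg u))]
          exact hinv_ub u hu
        · exact le_trans (hnumden u') (hden_ub u' hu')
      have hψlip : ∀ u ∈ ball x₀ r, ∀ u' ∈ ball x₀ r,
          |ψ u - ψ u'| ≤ ((Kφ:ℝ)/ε + 2/δ) * dist u u' := by
        intro u hu u' hu'
        have hφd : |φ u - φ u'| ≤ (Kφ:ℝ) * dist u u' := by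
          have := lipschitzOnWith_iff_dist_le_mul.mp hφlip u (hsubφ hu) u' (hsubφ hu')
          rwa [Real.dist_eq] at this
        have h1 : |max 0 (min 1 (2 - |φ u - c|/ε)) - max 0 (min 1 (2 - |φ u' - c|/ε))|
            ≤ ((Kφ:ℝ)/ε) * dist u u' := by
          refine (clamp_lip _ _).trans ?_
          have h2 : (2 - |φ u - c|/ε) - (2 - |φ u' - c|/ε) = (|φ u' - c| - |φ u - c|)/ε := by
            ring
          rw [h2, abs_div, abs_of_pos hε, div_le_iff₀ hε]
          have h8 : ((Kφ:ℝ)/ε) * dist u u' * ε = (Kφ:ℝ) * dist u u' := by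
            field_simp
          rw [h8]
          calc |(|φ u' - c|) - (|φ u - c|)| ≤ |(φ u' - c) - (φ u - c)| :=
            abs_abs_sub_abs_le_abs_sub _ _
          _ = |φ u' - φ u| := by rw [sub_sub_sub_cancel_right]
          _ = |φ u - φ u'| := abs_sub_comm _ _
          _ ≤ (Kφ:ℝ) * dist u u' := hφd
        have h3 : |max 0 (min 1 (3 - 2*infDist u S/δ)) - max 0 (min 1 (3 - 2*infDist u' S/δ))|
            ≤ (2/δ) * dist u u' := by
          refine (clamp_lip _ _).trans ?_
          have h4 : (3 - 2*infDist u S/δ) - (3 - 2*infDist u' S/δ)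
              = 2*(infDist u' S - infDist u S)/δ := by ring
          rw [h4, abs_div, abs_of_pos hδ, div_le_iff₀ hδ]
          have h5 : |infDist u' S - infDist u S| ≤ dist u u' := by
            have h7 := (lipschitz_infDist_pt S).dist_le_mul u' u
            rw [Real.dist_eq, NNReal.coe_one, one_mul, dist_comm u' u] at h7
            exact h7
          have h9 : 2/δ * dist u u' * δ = 2 * dist u u' := by
            field_simp
          rw [h9, abs_mul]
          have h6 : |(2:ℝ)| = 2 := by norm_num
          rw [h6]
          linarith
        have hb1 : |max 0 (min 1 (2 - |φ u - c|/ε))| ≤ 1 := by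
          rw [abs_of_nonneg (clamp_nonneg _)]
          exact clamp_le_one _
        have hb2 : |max 0 (min 1 (3 - 2*infDist u' S/δ))| ≤ 1 := by
          rw [abs_of_nonneg (clamp_nonneg _)]
          exact clamp_le_one _
        have := norm_smul_sub_smul_le (E := ℝ)
          (g₁ := max 0 (min 1 (2 - |φ u - c|/ε))) (g₂ := max 0 (min 1 (2 - |φ u' - c|/ε)))
          (w₁ := max 0 (min 1 (3 - 2*infDist u S/δ))) (w₂ := max 0 (min 1 (3 - 2*infDist u' S/δ)))
          h1 (le_trans (le_of_eq (Real.norm_eq_abs _)) h3) hb1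
          (le_trans (le_of_eq (Real.norm_eq_abs _)) hb2)
        rw [hψ]
        dsimp only
        rw [smul_eq_mul, smul_eq_mul] at this
        rw [← Real.norm_eq_abs]
        refine this.trans (le_of_eq (by ring))
      refine ⟨r, hrpos, ((Kφ:ℝ)/ε + 2/δ) * 1
          + 1 * ((card * (2/d₀) * (2/d₀)) * (2*d₀) + (2/d₀) * card), fun u hu u' hu' => ?_⟩
      have hvN : ∀ z ∈ ball x₀ r, v z = ψ z • wv z := by
        intro z hz
        rw [hv]; dsimp only
        rw [if_pos (hsubN hz)]
      rw [dist_eq_norm, hvN u hu, hvN u' hu']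
      refine norm_smul_sub_smul_le (hψlip u hu u' hu') (hwlip u hu u' hu') ?_ ?_
      · rw [abs_of_nonneg (hψnonneg u)]
        exact hψle u
      · exact hwnorm u' (hsubN hu')
    · have hx₀A : x₀ ∉ A := fun hA' => hx₀ (hAN hA')
      obtain ⟨r, hrpos, hrsub⟩ := Metric.mem_nhds_iff.mp (hAclosed.isOpen_compl.mem_nhds hx₀A)
      refine ⟨r, hrpos, 0, fun u hu u' hu' => ?_⟩
      have hz : ∀ z ∈ ball x₀ r, v z = 0 := by
        intro z hz
        have hzA : z ∉ A := hrsub hz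
        exact hP5 z hzA
      rw [hz u hu, hz u' hu', dist_self, zero_mul]
  -- the flow
  set T := δ/2 with hT
  have hT0 : (0:ℝ) ≤ T := by linarith
  set fv : X → X := fun x => -(v x) with hfv
  have hfb : ∀ x, ‖fv x‖ ≤ 1 := fun x => by
    rw [hfv]; dsimp only; rw [norm_neg]; exact hv1 x
  have hfl : LocallyLipschitz fv := by
    have heq : fv = (fun z : X => -z) ∘ v := rfl
    have hneg : LipschitzWith 1 (fun z : X => -z) :=
      LipschitzWith.of_dist_le_mul fun a b => by rw [dist_neg_neg]; simp
    rw [heq]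
    exact hneg.locallyLipschitz.comp hvLL
  obtain ⟨η, hη⟩ := exists_homeo hfb hfl hT0
  have hφmono : ∀ (u : X) (σ : ℝ → X), Sol fv T u σ → ∀ s t : ℝ, 0 ≤ s → s ≤ t → t ≤ T →
      φ (σ t) ≤ φ (σ s) := by
    intro u σ hσ s t hs hst htT
    rcases eq_or_lt_of_le hst with he | hlt
    · rw [he]
    · have hder : ∀ x ∈ Ioo s t, HasDerivAt (fun r => φ (σ r)) (D (σ x) (fv (σ x))) x := by
        intro x hx
        have h1 : HasDerivAt σ (fv (σ x)) x :=
          (hσ.2 x ⟨by linarith [hx.1], by linarith [hx.2]⟩).hasDerivAt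
            (Icc_mem_nhds (by linarith [hx.1]) (by linarith [hx.2]))
        exact ((hφdiff (σ x)).hasFDerivAt).comp_hasDerivAt x h1
      have hcont : ContinuousOn (fun r => φ (σ r)) (Icc s t) :=
        hφ.continuous.comp_continuousOn (hσ.continuousOn.mono (Icc_subset_Icc hs htT))
      have hbound : ∀ x ∈ Ioo s t, D (σ x) (fv (σ x)) ≤ 0 := by
        intro x hx
        have : D (σ x) (fv (σ x)) = -(D (σ x) (v (σ x))) := by
          rw [hfv]; dsimp only; rw [map_neg]
        rw [this]
        exact neg_nonpos.mpr (hP3 (σ x))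
      have := descent_mvt hlt hcont hder hbound
      simpa using this
  refine ⟨η, ?_, ?_, ?_, ?_⟩
  · intro u
    obtain ⟨σ, hσ, hησ⟩ := hη u
    rw [hησ, ← hσ.1]
    exact hφmono u σ hσ 0 T le_rfl hT0 le_rfl
  · intro u hcase
    obtain ⟨σ, hσ, hησ⟩ := hη u
    have huA : u ∉ A := by
      rcases hcase with hc1 | hc2
      · intro hu
        refine hc1 (Set.mem_Icc.mpr ?_)
        have := abs_le.mp hu.1
        constructor <;> linarith [this.1, this.2]
      · intro hu
        have hlt : infDist u S < 2*δ := lt_of_le_of_lt hu.2 (by linarith)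
        obtain ⟨s', hs'S, hds⟩ := (infDist_lt_iff hSne).mp hlt
        have hmem : s' ∈ Metric.closedBall u (2*δ) ∩ S :=
          ⟨mem_closedBall.mpr (by rw [dist_comm]; exact hds.le), hs'S⟩
        rw [hc2] at hmem
        exact hmem
    have hvu : fv u = 0 := by
      rw [hfv]; dsimp only
      rw [hP5 u huA, neg_zero]
    have hconst : Sol fv T u (fun _ => u) := sol_const hvu T
    have hequ := Sol.unique hfb hfl hT0 hconst hσ
    have := hequ ⟨hT0, le_rfl⟩
    rw [hησ, this]
  · intro u huS hφu
    obtain ⟨σ, hσ, hησ⟩ := hη u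
    by_contra hgt
    push_neg at hgt
    rw [hησ] at hgt
    have hTpos : 0 < T := by rw [hT]; linarith
    have hmonot := hφmono u σ hσ
    have hφσ : ∀ x ∈ Icc (0:ℝ) T, c - ε < φ (σ x) ∧ φ (σ x) ≤ c + ε := by
      intro x hx
      constructor
      · have := hmonot x T hx.1 hx.2 le_rfl
        linarith
      · have := hmonot 0 x le_rfl hx.1 hx.2
        rw [hσ.1] at this
        linarith
    have hψσ : ∀ x ∈ Icc (0:ℝ) T, ψ (σ x) = 1 := by
      intro x hx
      apply hψ1
      · have := hφσ x hx
        rw [abs_le]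
        constructor <;> linarith [this.1, this.2]
      · have h1 : infDist (σ x) S ≤ dist (σ x) u := infDist_le_dist_of_mem huS
        have h2 : dist (σ x) u ≤ x := by
          rw [dist_eq_norm, ← hσ.1]
          have := hσ.norm_sub_le hfb hx ⟨le_rfl, hT0⟩
          rwa [sub_zero, abs_of_nonneg hx.1] at this
        have : x ≤ δ := le_trans hx.2 (by rw [hT]; linarith)
        linarith
    have hder : ∀ x ∈ Ioo (0:ℝ) T, HasDerivAt (fun r => φ (σ r)) (D (σ x) (fv (σ x))) x := by
      intro x hx
      have h1 : HasDerivAt σ (fv (σ x)) x :=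
        (hσ.2 x ⟨hx.1.le, hx.2.le⟩).hasDerivAt
          (Icc_mem_nhds hx.1 hx.2)
      exact ((hφdiff (σ x)).hasFDerivAt).comp_hasDerivAt x h1
    have hcont : ContinuousOn (fun r => φ (σ r)) (Icc 0 T) :=
      hφ.continuous.comp_continuousOn hσ.continuousOn
    have hbound : ∀ x ∈ Ioo (0:ℝ) T, D (σ x) (fv (σ x)) ≤ -(m/2) := by
      intro x hx
      have heq : D (σ x) (fv (σ x)) = -(D (σ x) (v (σ x))) := by
        rw [hfv]; dsimp only; rw [map_neg]
      rw [heq, neg_le_neg_iff]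
      exact hP4 (σ x) (hψσ x ⟨hx.1.le, hx.2.le⟩)
    have hkey := descent_mvt hTpos hcont hder hbound
    rw [hσ.1, sub_zero] at hkey
    have harith : -(m/2) * T = -(2*ε) := by
      rw [hm, hT]
      field_simp
      ring
    rw [harith] at hkey
    linarith
  · intro u
    obtain ⟨σ, hσ, hησ⟩ := hη u
    rw [hησ, ← hσ.1]
    have := hσ.norm_sub_le hfb ⟨hT0, le_rfl⟩ ⟨le_rfl, hT0⟩
    rw [sub_zero, abs_of_nonneg hT0] at this
    refine this.trans ?_
    rw [hT]; linarith
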